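/- Let g : [a,b] → ℝ be twice continuously differentiable and let I₂g be its piecewise linear interpolant at knots a = a₀ < ⋯ < a_k = b. Then sup_{x∈[a,b]} |g(x) − I₂g(x)| ≤ (1/8) |a|² · sup_{x∈[a,b]} |g″(x)|, where |a| = max_j (a_j − a_{j−1}). -/

import Mathlib

open Set

lemma rolle2_aux (f f' f'' : ℝ → ℝ) (p q : ℝ) (hpq : p < q)
    (hf : ∀ t ∈ Set.Icc p q, HasDerivAt f (f' t) t)
    (hf' : ∀ t ∈ Set.Icc p q, HasDerivAt f' (f'' t) t)
    (hp : f p = 0) (hq : f q = 0)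
    (M : ℝ) (hM : ∀ t ∈ Set.Icc p q, |f'' t| ≤ M)
    (x : ℝ) (hx : x ∈ Set.Icc p q) :
    |f x| ≤ M * ((x - p) * (q - x)) / 2 := by
  obtain ⟨hpx, hxq⟩ := hx
  have hM0 : 0 ≤ M := le_trans (abs_nonneg _) (hM p ⟨le_refl _, hpq.le⟩)
  rcases eq_or_lt_of_le hpx with rfl | hpx
  · simp [hp]
  rcases eq_or_lt_of_le hxq with rfl | hxq
  · simp [hq]
  have hden : (x - p) * (x - q) ≠ 0 := by
    have h1 : (0:ℝ) < x - p := by linarith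
    have h2 : x - q < 0 := by linarith
    nlinarith
  set K : ℝ := f x / ((x - p) * (x - q)) with hK
  have hKden : K * ((x - p) * (x - q)) = f x := div_mul_cancel₀ _ hden
  set φ : ℝ → ℝ := fun t => f t - K * ((t - p) * (t - q)) with hφdef
  set φ' : ℝ → ℝ := fun t => f' t - K * (2 * t - p - q) with hφ'def
  have hφd : ∀ t ∈ Icc p q, HasDerivAt φ (φ' t) t := by
    intro t ht
    have h1 : HasDerivAt (fun s => (s - p) * (s - q)) ((t - q) + (t - p)) t := by
      simpa using ((hasDerivAt_id t).sub_const p).fun_mul ((hasDerivAt_id t).sub_const q)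
    have h2 := (h1.const_mul K)
    have := (hf t ht).fun_sub h2
    refine this.congr_deriv ?_
    simp only [hφ'def]; ring
  have hφ'd : ∀ t ∈ Icc p q, HasDerivAt φ' (f'' t - 2 * K) t := by
    intro t ht
    have h1 : HasDerivAt (fun s => K * (2 * s - p - q)) (K * 2) t := by
      have : HasDerivAt (fun s : ℝ => 2 * s - p - q) 2 t := by
        simpa using (((hasDerivAt_id t).const_mul (2:ℝ)).sub_const p).sub_const q
      simpa using this.const_mul K
    have := (hf' t ht).fun_sub h1
    refine this.congr_deriv ?_
    ring
  have hφcont : ContinuousOn φ (Icc p q) := fun t ht =>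
    (hφd t ht).continuousAt.continuousWithinAt
  have hφp : φ p = 0 := by simp [hφdef, hp]
  have hφq : φ q = 0 := by simp [hφdef, hq]
  have hφx : φ x = 0 := by simp [hφdef, hKden]
  have hsub1 : Icc p x ⊆ Icc p q := Icc_subset_Icc le_rfl hxq.le
  have hsub2 : Icc x q ⊆ Icc p q := Icc_subset_Icc hpx.le le_rfl
  obtain ⟨z1, hz1, hz1'⟩ := exists_hasDerivAt_eq_zero hpx (hφcont.mono hsub1)
    (hφp.trans hφx.symm) (fun t ht => hφd t (hsub1 (Ioo_subset_Icc_self ht)))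
  obtain ⟨z2, hz2, hz2'⟩ := exists_hasDerivAt_eq_zero hxq (hφcont.mono hsub2)
    (hφx.trans hφq.symm) (fun t ht => hφd t (hsub2 (Ioo_subset_Icc_self ht)))
  have hz12 : z1 < z2 := lt_trans hz1.2 hz2.1
  have hsub3 : Icc z1 z2 ⊆ Icc p q := Icc_subset_Icc hz1.1.le hz2.2.le
  have hφ'cont : ContinuousOn φ' (Icc z1 z2) := fun t ht =>
    (hφ'd t (hsub3 ht)).continuousAt.continuousWithinAt
  obtain ⟨ξ, hξ, hξ'⟩ := exists_hasDerivAt_eq_zero hz12 hφ'cont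
    (hz1'.trans hz2'.symm) (fun t ht => hφ'd t (hsub3 (Ioo_subset_Icc_self ht)))
  have hξmem : ξ ∈ Icc p q := hsub3 (Ioo_subset_Icc_self hξ)
  have h2K : |2 * K| ≤ M := by
    have : f'' ξ = 2 * K := by linarith [hξ']
    calc |2 * K| = |f'' ξ| := by rw [this]
    _ ≤ M := hM ξ hξmem
  -- |f x| = |K| * (x-p)*(q-x)
  have habs : |f x| = |K| * ((x - p) * (q - x)) := by
    rw [← hKden, abs_mul]
    congr 1
    rw [abs_of_nonpos (by nlinarith : (x - p) * (x - q) ≤ 0)]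
    ring
  have hKabs : |K| ≤ M / 2 := by
    rw [abs_mul, abs_two] at h2K; linarith [abs_nonneg K]
  rw [habs]
  have hfac : (0:ℝ) ≤ (x - p) * (q - x) := by nlinarith
  calc |K| * ((x - p) * (q - x)) ≤ (M / 2) * ((x - p) * (q - x)) :=
        mul_le_mul_of_nonneg_right hKabs hfac
    _ = M * ((x - p) * (q - x)) / 2 := by ring

lemma find_interval (a : ℕ → ℝ) : ∀ k : ℕ, 0 < k → (∀ j < k, a j < a (j + 1)) →
    ∀ x ∈ Set.Icc (a 0) (a k), ∃ j < k, x ∈ Set.Icc (a j) (a (j + 1)) := by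
  intro k
  induction k with
  | zero => intro h; exact absurd h (lt_irrefl 0)
  | succ n ih =>
    intro _ hmono x hx
    rcases Nat.eq_zero_or_pos n with rfl | hn
    · exact ⟨0, Nat.zero_lt_one, hx⟩
    by_cases hxn : x ≤ a n
    · obtain ⟨j, hj, hmem⟩ := ih hn (fun j hj => hmono j (Nat.lt_succ_of_lt hj)) x ⟨hx.1, hxn⟩
      exact ⟨j, Nat.lt_succ_of_lt hj, hmem⟩
    · exact ⟨n, Nat.lt_succ_self n, ⟨(not_le.mp hxn).le, hx.2⟩⟩

/-- Sharp linear interpolation error bound for C² functions: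
`‖g - I₂g‖ ≤ (1/8)|a|² ‖g″‖`. -/
theorem stmt_19 (g g' g'' L : ℝ → ℝ) (k : ℕ) (hk : 0 < k) (a : ℕ → ℝ)
    (hmono : ∀ j < k, a j < a (j + 1))
    (hg : ∀ x ∈ Set.Icc (a 0) (a k), HasDerivAt g (g' x) x)
    (hg' : ∀ x ∈ Set.Icc (a 0) (a k), HasDerivAt g' (g'' x) x)
    (hg'' : ContinuousOn g'' (Set.Icc (a 0) (a k)))
    (hinterp : ∀ j ≤ k, L (a j) = g (a j))
    (haffine : ∀ j < k, ∃ c d : ℝ, ∀ x ∈ Set.Icc (a j) (a (j + 1)), L x = c * x + d)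
    (mesh : ℝ) (hmesh : ∀ j < k, a (j + 1) - a j ≤ mesh)
    (M : ℝ) (hM : ∀ x ∈ Set.Icc (a 0) (a k), |g'' x| ≤ M) :
    ∀ x ∈ Set.Icc (a 0) (a k), |g x - L x| ≤ (1 / 8) * mesh ^ 2 * M := by
  intro x hx
  obtain ⟨j, hj, hmem⟩ := find_interval a k hk hmono x hx
  obtain ⟨c, d, hcd⟩ := haffine j hj
  -- monotonicity: a j ≥ a 0, a (j+1) ≤ a k
  have key : ∀ m n, m + n ≤ k → a m ≤ a (m + n) := by
    intro m n
    induction n with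
    | zero => simp
    | succ t ih =>
      intro h
      have h1 := hmono (m + t) (by omega)
      have h2 := ih (by omega)
      have : m + (t + 1) = m + t + 1 := by omega
      rw [this]
      linarith
  have hsub : Set.Icc (a j) (a (j + 1)) ⊆ Set.Icc (a 0) (a k) := by
    apply Set.Icc_subset_Icc
    · simpa using key 0 j (by omega)
    · have := key (j + 1) (k - (j + 1)) (by omega)
      rwa [show j + 1 + (k - (j + 1)) = k by omega] at this
  set f : ℝ → ℝ := fun t => g t - (c * t + d) with hfdef
  have hf : ∀ t ∈ Set.Icc (a j) (a (j+1)), HasDerivAt f (g' t - c) t := by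
    intro t ht
    have h1 : HasDerivAt (fun s => c * s + d) c t := by
      simpa using ((hasDerivAt_id t).const_mul c).add_const d
    exact (hg t (hsub ht)).sub h1
  have hf' : ∀ t ∈ Set.Icc (a j) (a (j+1)), HasDerivAt (fun t => g' t - c) (g'' t) t := by
    intro t ht
    simpa using (hg' t (hsub ht)).sub_const c
  have hfp : f (a j) = 0 := by
    have := hinterp j hj.le
    have h2 := hcd (a j) ⟨le_rfl, (hmono j hj).le⟩
    simp [hfdef, ← h2, this]
  have hfq : f (a (j+1)) = 0 := by
    have := hinterp (j+1) hj
    have h2 := hcd (a (j+1)) ⟨(hmono j hj).le, le_rfl⟩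
    simp [hfdef, ← h2, this]
  have hbound := rolle2_aux f (fun t => g' t - c) g'' (a j) (a (j+1)) (hmono j hj)
    hf hf' hfp hfq M (fun t ht => hM t (hsub ht)) x hmem
  have hLx : L x = c * x + d := hcd x hmem
  have hgL : g x - L x = f x := by simp [hfdef, hLx]
  rw [hgL]
  have hM0 : 0 ≤ M := le_trans (abs_nonneg _) (hM x hx)
  have h1 : (x - a j) * (a (j+1) - x) ≤ mesh ^ 2 / 4 := by
    have hm := hmesh j hj
    obtain ⟨h2, h3⟩ := hmem
    nlinarith [sq_nonneg (2 * x - a j - a (j + 1)), hmono j hj,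
      mul_nonneg (sub_nonneg.2 h2) (sub_nonneg.2 h3)]
  calc |f x| ≤ M * ((x - a j) * (a (j+1) - x)) / 2 := hbound
    _ ≤ M * (mesh ^ 2 / 4) / 2 := by nlinarith
    _ = (1/8) * mesh ^ 2 * M := by ring
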